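/- arXiv:1408.1989 — 3 statements merged into one kernel-verified Lean document; each statement's English description precedes it below -/
import Mathlib

section
/- First variation of the squared Ricci tensor at an Einstein metric (algebraic version of Lemma 2): with (r∘r)_t(x,y) := r_t(Ric_t x, y), where Ric_t : V → V is the unique endomorphism satisfying g_t(Ric_t x, y) = r_t(x, y) for all x, y, one has (d/dt)|_{t=0} (r∘r)_t = 2λ·r' − λ²·h, where h := (d/dt)|_{t=0} g_t and r' := (d/dt)|_{t=0} r_t. -/
open scoped BigOperators Matrix

/-- differentiability of the determinant of a matrix family with differentiable entries -/
lemma stmt4_det_diff {n : ℕ} {M : ℝ → Matrix (Fin n) (Fin n) ℝ}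
    (hM : ∀ i j, DifferentiableAt ℝ (fun t => M t i j) 0) :
    DifferentiableAt ℝ (fun t => (M t).det) 0 := by
  simp only [Matrix.det_apply']
  exact DifferentiableAt.fun_sum fun σ _ =>
    (DifferentiableAt.fun_finsetProd fun i _ => hM (σ i) i).const_mul _

/-- expansion of the derivative in the second slot along a basis -/
lemma stmt4_slot2 {V : Type*} [AddCommGroup V] [Module ℝ V]
    {ι : Type*} [Fintype ι] (b : Module.Basis ι ℝ V)
    (B : ℝ → V →ₗ[ℝ] V →ₗ[ℝ] ℝ) (B' : V → V → ℝ)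
    (hB : ∀ u v, HasDerivAt (fun t => B t u v) (B' u v) 0) (u v : V) :
    B' u v = ∑ k, b.repr v k * B' u (b k) := by
  have key : HasDerivAt (fun t => B t u v) (∑ k, b.repr v k * B' u (b k)) 0 := by
    have heq : ∀ t : ℝ, ∑ k, b.repr v k * B t u (b k) = B t u v := by
      intro t
      conv_rhs => rw [← b.sum_repr v]
      simp [map_sum, map_smul, smul_eq_mul, -Module.Basis.sum_repr]
    have : HasDerivAt (fun t => ∑ k, b.repr v k * B t u (b k))
        (∑ k, b.repr v k * B' u (b k)) 0 :=
      HasDerivAt.fun_sum fun k _ => (hB u (b k)).const_mul _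
    exact this.congr_of_eventuallyEq (Filter.Eventually.of_forall fun t => (heq t).symm)
  exact (hB u v).unique key

/-- expansion of the derivative in the first slot along a basis -/
lemma stmt4_slot1 {V : Type*} [AddCommGroup V] [Module ℝ V]
    {ι : Type*} [Fintype ι] (b : Module.Basis ι ℝ V)
    (B : ℝ → V →ₗ[ℝ] V →ₗ[ℝ] ℝ) (B' : V → V → ℝ)
    (hB : ∀ u v, HasDerivAt (fun t => B t u v) (B' u v) 0) (u v : V) :
    B' u v = ∑ k, b.repr u k * B' (b k) v := by
  have key : HasDerivAt (fun t => B t u v) (∑ k, b.repr u k * B' (b k) v) 0 := by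
    have heq : ∀ t : ℝ, ∑ k, b.repr u k * B t (b k) v = B t u v := by
      intro t
      conv_rhs => rw [← b.sum_repr u]
      simp [map_sum, map_smul, smul_eq_mul, -Module.Basis.sum_repr]
    have : HasDerivAt (fun t => ∑ k, b.repr u k * B t (b k) v)
        (∑ k, b.repr u k * B' (b k) v) 0 :=
      HasDerivAt.fun_sum fun k _ => (hB (b k) v).const_mul _
    exact this.congr_of_eventuallyEq (Filter.Eventually.of_forall fun t => (heq t).symm)
  exact (hB u v).unique key

/-- algebraic version of Lemma 2: first variation of the squared
Ricci tensor at an Einstein metric: with `(r∘r)_t(x,y) = r_t(Ric_t x, y)` one has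
`(d/dt)|₀ (r∘r)_t = 2λ·r' − λ²·h`. -/
theorem stmt_4
    {V : Type*} [AddCommGroup V] [Module ℝ V] [FiniteDimensional ℝ V]
    (g r : ℝ → V →ₗ[ℝ] V →ₗ[ℝ] ℝ)
    (hgsymm : ∀ (t : ℝ) (x y : V), g t x y = g t y x)
    (hgpos : ∀ (t : ℝ) (x : V), x ≠ 0 → 0 < g t x x)
    (hrsymm : ∀ (t : ℝ) (x y : V), r t x y = r t y x)
    (lam : ℝ)
    (hEinstein : ∀ x y : V, r 0 x y = lam * g 0 x y)
    (h r' : V → V → ℝ)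
    (hg' : ∀ x y : V, HasDerivAt (fun t => g t x y) (h x y) 0)
    (hr' : ∀ x y : V, HasDerivAt (fun t => r t x y) (r' x y) 0)
    (Ric : ℝ → V →ₗ[ℝ] V)
    (hRic : ∀ (t : ℝ) (x y : V), g t (Ric t x) y = r t x y)
    (x y : V) :
    HasDerivAt (fun t => r t (Ric t x) y)
      (2 * lam * r' x y - lam ^ 2 * h x y) 0 := by
  classical
  set n := Module.finrank ℝ V with hn
  set b : Module.Basis (Fin n) ℝ V := Module.finBasis ℝ V with hb
  -- the Gram matrix of g t, the vector of r t x against the basis, and coordinates of Ric t x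
  set G : ℝ → Matrix (Fin n) (Fin n) ℝ := fun t => Matrix.of fun i j => g t (b i) (b j) with hG
  set R : ℝ → Fin n → ℝ := fun t i => r t x (b i) with hR
  set c : ℝ → Fin n → ℝ := fun t i => b.repr (Ric t x) i with hc
  -- G t *ᵥ c t = R t
  have hmv : ∀ t, G t *ᵥ c t = R t := by
    intro t
    funext i
    have : g t (b i) (Ric t x) = ∑ j, c t j * g t (b i) (b j) := by
      conv_lhs => rw [← b.sum_repr (Ric t x)]
      simp [map_sum, map_smul, smul_eq_mul, hc, -Module.Basis.sum_repr]
    simp only [Matrix.mulVec, dotProduct, hG, Matrix.of_apply, hR]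
    rw [← hRic t x (b i), hgsymm t (Ric t x) (b i), this]
    exact Finset.sum_congr rfl fun j _ => mul_comm _ _
  -- det (G t) ≠ 0
  have hdet : ∀ t, (G t).det ≠ 0 := by
    intro t hdt
    obtain ⟨v, hv0, hv⟩ := (Matrix.exists_mulVec_eq_zero_iff).2 hdt
    set w : V := ∑ j, v j • b j with hw
    have hwrep : ∀ j, b.repr w j = v j := by
      intro j; simp [hw, Finsupp.single_apply]
    have hww : g t w w = 0 := by
      have h1 : g t w w = ∑ i, v i * g t (b i) w := by
        have e1 : (g t) w = ∑ i, v i • (g t) (b i) := by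
          rw [hw, map_sum]; simp only [map_smul]
        rw [e1, LinearMap.sum_apply]
        simp [smul_eq_mul]
      have h2 : ∀ i, g t (b i) w = (G t *ᵥ v) i := by
        intro i
        simp only [Matrix.mulVec, dotProduct, hG, Matrix.of_apply]
        conv_lhs => rw [hw]
        rw [map_sum]
        simp only [map_smul, smul_eq_mul]
        exact Finset.sum_congr rfl fun j _ => mul_comm _ _
      rw [h1]
      simp [h2, hv]
    have hwne : w ≠ 0 := by
      intro hw0
      apply hv0
      funext j
      have := hwrep j
      rw [hw0] at this
      simpa using this.symm
    exact absurd hww (ne_of_gt (hgpos t w hwne))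
  -- entries of G and R are differentiable at 0
  have hGdiff : ∀ i j, DifferentiableAt ℝ (fun t => G t i j) 0 := fun i j =>
    (hg' (b i) (b j)).differentiableAt
  have hRdiff : ∀ i, DifferentiableAt ℝ (fun t => R t i) 0 := fun i =>
    (hr' x (b i)).differentiableAt
  -- c is differentiable at 0
  have hcdiff : ∀ i, DifferentiableAt ℝ (fun t => c t i) 0 := by
    intro i
    have hcform : ∀ t, c t i = ∑ j, (G t).adjugate i j * R t j / (G t).det := by
      intro t
      have hinv : c t = (G t)⁻¹ *ᵥ R t := by
        rw [← hmv t, Matrix.mulVec_mulVec, Matrix.nonsing_inv_mul _ (isUnit_iff_ne_zero.2 (hdet t)),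
          Matrix.one_mulVec]
      rw [hinv]
      simp only [Matrix.inv_def, Ring.inverse_eq_inv', Matrix.mulVec, dotProduct,
        Matrix.smul_apply, smul_eq_mul]
      exact Finset.sum_congr rfl fun j _ => by ring
    have : DifferentiableAt ℝ (fun t => ∑ j, (G t).adjugate i j * R t j / (G t).det) 0 := by
      apply DifferentiableAt.fun_sum
      intro j _
      apply DifferentiableAt.div
      · apply DifferentiableAt.mul _ (hRdiff j)
        have : ∀ t, (G t).adjugate i j = ((G t).updateRow j (Pi.single i 1)).det := fun t =>
          Matrix.adjugate_apply _ _ _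
        simp only [this]
        apply stmt4_det_diff
        intro k l
        by_cases hkj : k = j
        · simp only [hkj, Matrix.updateRow_self]
          exact differentiableAt_const _
        · simp only [Matrix.updateRow_ne hkj]
          exact hGdiff k l
      · exact stmt4_det_diff hGdiff
      · exact hdet 0
    exact this.congr_of_eventuallyEq (Filter.Eventually.of_forall fun t => hcform t)
  set c' : Fin n → ℝ := fun i => deriv (fun t => c t i) 0 with hc'
  have hcderiv : ∀ i, HasDerivAt (fun t => c t i) (c' i) 0 := fun i =>
    (hcdiff i).hasDerivAt
  -- Ric 0 x = lam • x
  have hRic0 : Ric 0 x = lam • x := by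
    by_contra hne
    have hz : Ric 0 x - lam • x ≠ 0 := sub_ne_zero.2 hne
    have : g 0 (Ric 0 x - lam • x) (Ric 0 x - lam • x) = 0 := by
      have key : ∀ v : V, g 0 (Ric 0 x - lam • x) v = 0 := by
        intro v
        have : g 0 (Ric 0 x) v = lam * g 0 x v := by rw [hRic, hEinstein]
        simp [map_sub, map_smul, smul_eq_mul, this, hgsymm 0 x v]
      exact key _
    exact absurd this (ne_of_gt (hgpos 0 _ hz))
  have hc0 : ∀ j, c 0 j = lam * b.repr x j := by
    intro j; simp [hc, hRic0, map_smul, smul_eq_mul]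
  -- symmetry of h
  have hhsymm : ∀ u v : V, h u v = h v u := by
    intro u v
    refine (hg' u v).unique ?_
    exact (hg' v u).congr_of_eventuallyEq
      (Filter.Eventually.of_forall fun t => (hgsymm t u v))
  -- key Gram identity: derivative of G *ᵥ c = R componentwise
  have hkey : ∀ k, ∑ j, (h (b k) (b j) * c 0 j + g 0 (b k) (b j) * c' j) = r' x (b k) := by
    intro k
    have lhs : HasDerivAt (fun t => ∑ j, G t k j * c t j)
        (∑ j, (h (b k) (b j) * c 0 j + g 0 (b k) (b j) * c' j)) 0 :=
      HasDerivAt.fun_sum fun j _ => (hg' (b k) (b j)).mul (hcderiv j)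
    have rhs : HasDerivAt (fun t => ∑ j, G t k j * c t j) (r' x (b k)) 0 := by
      refine (hr' x (b k)).congr_of_eventuallyEq
        (Filter.Eventually.of_forall fun t => ?_)
      have := congrFun (hmv t) k
      simpa only [Matrix.mulVec, dotProduct, hR] using this
    exact lhs.unique rhs
  -- compute ∑ j h (b k) (b j) * c 0 j = lam * h (b k) x
  have hsum_h : ∀ k, ∑ j, h (b k) (b j) * c 0 j = lam * h (b k) x := by
    intro k
    have := stmt4_slot2 b g h hg' (b k) x
    calc ∑ j, h (b k) (b j) * c 0 j = lam * ∑ j, b.repr x j * h (b k) (b j) := by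
          rw [Finset.mul_sum]; exact Finset.sum_congr rfl fun j _ => by rw [hc0 j]; ring
      _ = lam * h (b k) x := by rw [← this]
  -- hence ∑ j g 0 (b k) (b j) * c' j = r' x (b k) - lam * h (b k) x
  have hgc' : ∀ k, ∑ j, g 0 (b k) (b j) * c' j = r' x (b k) - lam * h (b k) x := by
    intro k
    have := hkey k
    rw [Finset.sum_add_distrib, hsum_h k] at this
    linarith
  -- first-slot linearity of h and r'
  have hr'1 := stmt4_slot1 b r r' hr'
  have hr'2 := stmt4_slot2 b r r' hr'
  have hh1 := stmt4_slot1 b g h hg'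
  -- main quantity S = ∑ i c' i * g 0 (b i) y
  have hS : ∑ i, c' i * g 0 (b i) y = r' x y - lam * h x y := by
    have expand : ∀ i, g 0 (b i) y = ∑ k, b.repr y k * g 0 (b i) (b k) := by
      intro i
      conv_lhs => rw [← b.sum_repr y]
      simp [map_sum, map_smul, smul_eq_mul, -Module.Basis.sum_repr]
    calc ∑ i, c' i * g 0 (b i) y
        = ∑ i, ∑ k, b.repr y k * (g 0 (b k) (b i) * c' i) := by
          refine Finset.sum_congr rfl fun i _ => ?_
          rw [expand i, Finset.mul_sum]
          exact Finset.sum_congr rfl fun k _ => by rw [hgsymm 0 (b i) (b k)]; ring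
      _ = ∑ k, b.repr y k * (∑ i, g 0 (b k) (b i) * c' i) := by
          rw [Finset.sum_comm]
          exact Finset.sum_congr rfl fun k _ => by rw [Finset.mul_sum]
      _ = ∑ k, b.repr y k * (r' x (b k) - lam * h (b k) x) := by
          exact Finset.sum_congr rfl fun k _ => by rw [hgc' k]
      _ = (∑ k, b.repr y k * r' x (b k)) - lam * ∑ k, b.repr y k * h (b k) x := by
          rw [Finset.mul_sum, ← Finset.sum_sub_distrib]
          exact Finset.sum_congr rfl fun k _ => by ring
      _ = r' x y - lam * h x y := by
          rw [← hr'2 x y, ← hh1 y x, hhsymm y x]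
  -- the function expanded in coordinates
  have hFexp : ∀ t, r t (Ric t x) y = ∑ i, c t i * r t (b i) y := by
    intro t
    conv_lhs => rw [← b.sum_repr (Ric t x)]
    simp [map_sum, map_smul, smul_eq_mul, hc, -Module.Basis.sum_repr]
  have hF : HasDerivAt (fun t => ∑ i, c t i * r t (b i) y)
      (∑ i, (c' i * r 0 (b i) y + c 0 i * r' (b i) y)) 0 :=
    HasDerivAt.fun_sum fun i _ => (hcderiv i).mul (hr' (b i) y)
  have hval : ∑ i, (c' i * r 0 (b i) y + c 0 i * r' (b i) y)
      = 2 * lam * r' x y - lam ^ 2 * h x y := by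
    rw [Finset.sum_add_distrib]
    have t1 : ∑ i, c' i * r 0 (b i) y = lam * (r' x y - lam * h x y) := by
      calc ∑ i, c' i * r 0 (b i) y = lam * ∑ i, c' i * g 0 (b i) y := by
            rw [Finset.mul_sum]
            exact Finset.sum_congr rfl fun i _ => by rw [hEinstein (b i) y]; ring
        _ = lam * (r' x y - lam * h x y) := by rw [hS]
    have t2 : ∑ i, c 0 i * r' (b i) y = lam * r' x y := by
      calc ∑ i, c 0 i * r' (b i) y = lam * ∑ i, b.repr x i * r' (b i) y := by
            rw [Finset.mul_sum]
            exact Finset.sum_congr rfl fun i _ => by rw [hc0 i]; ring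
        _ = lam * r' x y := by rw [← hr'1 x y]
    rw [t1, t2]; ring
  rw [← hval]
  exact hF.congr_of_eventuallyEq (Filter.Eventually.of_forall fun t => hFexp t)
end

section
/- First variation of ∘R(r) at an Einstein metric (algebraic version of Lemma 3): with r_t(x,y) := Σ_{i,j} g_t^{ij} R_t(x, w_i, y, w_j) the g_t-Ricci contraction of R_t and ∘R_t(k)(x,y) := Σ_{i,j,p,q} g_t^{ip} g_t^{jq} R_t(w_i, x, w_j, y) k(w_p, w_q) for a symmetric bilinear form k (where {w_i} is any fixed basis of V and (g_t^{ij}) is the inverse of the matrix (g_t(w_i, w_j))), if r_0 = λ·g_0 then (d/dt)|_{t=0} [∘R_t(r_t)] = −λ·∘R(h) + ∘R(r') + λ·r', where R := R_0, h := (d/dt)|_{t=0} g_t, r' := (d/dt)|_{t=0} r_t, and ∘R is taken with respect to g_0. -/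
open scoped BigOperators

open Matrix

private lemma diffAt_finset_prod {κ : Type*} [DecidableEq κ] (s : Finset κ)
    (f : κ → ℝ → ℝ) (hf : ∀ i, DifferentiableAt ℝ (f i) 0) :
    DifferentiableAt ℝ (fun t => ∏ i ∈ s, f i t) 0 := by
  induction s using Finset.induction_on with
  | empty => simp
  | insert _ _ hx ih =>
    simp only [Finset.prod_insert hx]
    exact (hf _).mul ih

private lemma diffAt_det {ι : Type*} [Fintype ι] [DecidableEq ι] (M : ℝ → Matrix ι ι ℝ)
    (hM : ∀ i j, DifferentiableAt ℝ (fun t => M t i j) 0) :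
    DifferentiableAt ℝ (fun t => (M t).det) 0 := by
  have hrw : (fun t => (M t).det)
      = fun t => ∑ σ : Equiv.Perm ι, ((Equiv.Perm.sign σ : ℤ) : ℝ) * ∏ i, M t (σ i) i := by
    funext t
    rw [Matrix.det_apply]
    simp [Units.smul_def, zsmul_eq_mul]
  rw [hrw]
  exact DifferentiableAt.fun_sum fun σ _ =>
    (differentiableAt_const _).mul (diffAt_finset_prod (κ := ι) _ _ fun i => hM _ _)


/-- algebraic version of Lemma 3: first variation of `∘R(r)` at an
Einstein metric: `(d/dt)|₀ [∘R_t(r_t)] = −λ·∘R(h) + ∘R(r') + λ·r'`. -/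
theorem stmt_5
    {V : Type*} [AddCommGroup V] [Module ℝ V] [FiniteDimensional ℝ V]
    {ι : Type*} [Fintype ι] [DecidableEq ι]
    (w : Module.Basis ι ℝ V)
    (g : ℝ → V →ₗ[ℝ] V →ₗ[ℝ] ℝ)
    (hgsymm : ∀ (t : ℝ) (x y : V), g t x y = g t y x)
    (hgpos : ∀ (t : ℝ) (x : V), x ≠ 0 → 0 < g t x x)
    (R : ℝ → V →ₗ[ℝ] V →ₗ[ℝ] V →ₗ[ℝ] V →ₗ[ℝ] ℝ)
    (hR1 : ∀ (t : ℝ) (x y z u : V), R t x y z u = -R t y x z u)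
    (hR2 : ∀ (t : ℝ) (x y z u : V), R t x y z u = -R t x y u z)
    (hR3 : ∀ (t : ℝ) (x y z u : V), R t x y z u = R t z u x y)
    (hBianchi : ∀ (t : ℝ) (x y z u : V),
      R t x y z u + R t y z x u + R t z x y u = 0)
    (h : V → V → ℝ) (R' : V → V → V → V → ℝ)
    (hg' : ∀ x y : V, HasDerivAt (fun t => g t x y) (h x y) 0)
    (hR' : ∀ x y z u : V, HasDerivAt (fun t => R t x y z u) (R' x y z u) 0)
    -- the inverse of the Gram matrix of `g_t` in the fixed basis `w`
    (ginv : ℝ → ι → ι → ℝ)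
    (hginv : ∀ t : ℝ, ginv t = fun i j => (Matrix.of fun i j => g t (w i) (w j))⁻¹ i j)
    -- the `g_t`-Ricci contraction of `R_t`
    (rt : ℝ → V → V → ℝ)
    (hrt : ∀ (t : ℝ) (x y : V), rt t x y = ∑ i, ∑ j, ginv t i j * R t x (w i) y (w j))
    (lam : ℝ)
    (hEinstein : ∀ x y : V, rt 0 x y = lam * g 0 x y)
    -- `r'`, the derivative of `r_t` at `t = 0`
    (r' : V → V → ℝ)
    (hr' : ∀ x y : V, HasDerivAt (fun t => rt t x y) (r' x y) 0)
    -- `∘R` taken with respect to `g_0`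
    (circR : (V → V → ℝ) → V → V → ℝ)
    (hcircR : ∀ (k : V → V → ℝ) (x y : V), circR k x y =
      ∑ i, ∑ j, ∑ p, ∑ q,
        ginv 0 i p * ginv 0 j q * R 0 (w i) x (w j) y * k (w p) (w q))
    -- `∘R_t(r_t)`
    (circRt : ℝ → V → V → ℝ)
    (hcircRt : ∀ (t : ℝ) (x y : V), circRt t x y =
      ∑ i, ∑ j, ∑ p, ∑ q,
        ginv t i p * ginv t j q * R t (w i) x (w j) y * rt t (w p) (w q))
    (x y : V) :
    HasDerivAt (fun t => circRt t x y)
      (-lam * circR h x y + circR r' x y + lam * r' x y) 0 := by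
  classical
  set G : ℝ → Matrix ι ι ℝ := fun t => Matrix.of fun i j => g t (w i) (w j) with hG
  -- the Gram matrix is invertible for every t
  have hdet : ∀ t, (G t).det ≠ 0 := by
    intro t hdet0
    obtain ⟨v, hv0, hveq⟩ := (Matrix.exists_mulVec_eq_zero_iff).2 hdet0
    set xv : V := ∑ j, v j • w j with hxvdef
    have hxv : xv ≠ 0 := by
      intro hz
      exact hv0 (funext (Fintype.linearIndependent_iff.1 w.linearIndependent v hz))
    have hzrow : ∀ i, ∑ k, g t (w i) (w k) * v k = 0 := by
      intro i
      have := congrFun hveq i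
      simpa [Matrix.mulVec, dotProduct, hG] using this
    have hexp : g t xv xv = ∑ i, v i * ∑ k, g t (w i) (w k) * v k := by
      simp only [hxvdef, map_sum, _root_.map_smul, LinearMap.sum_apply, LinearMap.smul_apply,
        smul_eq_mul, Finset.mul_sum]
      exact Finset.sum_congr rfl fun i _ => Finset.sum_congr rfl fun k _ => by
        rw [hgsymm t (w k) (w i)]
        try ring
    have : g t xv xv = 0 := by
      rw [hexp]
      simp [hzrow]
    exact absurd this (ne_of_gt (hgpos t xv hxv))
  have hinv_mul : ∀ t, (G t)⁻¹ * G t = 1 := fun t =>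
    Matrix.nonsing_inv_mul _ (isUnit_iff_ne_zero.2 (hdet t))
  have hmul_inv : ∀ t, G t * (G t)⁻¹ = 1 := fun t =>
    Matrix.mul_nonsing_inv _ (isUnit_iff_ne_zero.2 (hdet t))
  have hginv_entry : ∀ (t : ℝ) (i j : ι), ginv t i j = (G t)⁻¹ i j := by
    intro t i j; rw [hginv t]
  -- inverse times Gram = delta
  have hNGt : ∀ (t : ℝ) (i j : ι),
      ∑ k, ginv t i k * g t (w k) (w j) = if i = j then 1 else 0 := by
    intro t i j
    have h1 : ((G t)⁻¹ * G t) i j = (1 : Matrix ι ι ℝ) i j := by rw [hinv_mul t]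
    rw [Matrix.mul_apply, Matrix.one_apply] at h1
    simpa [hginv_entry, hG] using h1
  have hGN0 : ∀ (a b : ι),
      ∑ k, g 0 (w a) (w k) * ginv 0 k b = if a = b then 1 else 0 := by
    intro a b
    have h1 : (G 0 * (G 0)⁻¹) a b = (1 : Matrix ι ι ℝ) a b := by rw [hmul_inv 0]
    rw [Matrix.mul_apply, Matrix.one_apply] at h1
    simpa [hginv_entry, hG] using h1
  -- the inverse Gram matrix is symmetric
  have hginvsymm : ∀ (t : ℝ) (i j : ι), ginv t i j = ginv t j i := by
    intro t i j
    have hGsym : (G t)ᵀ = G t := by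
      ext a b
      simp [hG, Matrix.transpose_apply, hgsymm t]
    have : ((G t)⁻¹)ᵀ = (G t)⁻¹ := by
      rw [Matrix.transpose_nonsing_inv, hGsym]
    rw [hginv_entry, hginv_entry]
    conv_lhs => rw [← this]
    rw [Matrix.transpose_apply]
  -- differentiability of the entries of the inverse Gram matrix
  have hdiffG : ∀ i j : ι, DifferentiableAt ℝ (fun t => G t i j) 0 := fun i j =>
    (hg' (w i) (w j)).differentiableAt
  have hdiffginv : ∀ i j : ι, DifferentiableAt ℝ (fun t => ginv t i j) 0 := by
    intro i j
    have heq : (fun t => ginv t i j) = fun t => ((G t).det)⁻¹ * (G t).adjugate i j := by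
      funext t
      rw [hginv_entry, Matrix.inv_def, Ring.inverse_eq_inv', Matrix.smul_apply, smul_eq_mul]
    rw [heq]
    refine DifferentiableAt.mul ((diffAt_det G hdiffG).inv (hdet 0)) ?_
    have hadj : (fun t => (G t).adjugate i j)
        = fun t => ((G t).updateRow j (Pi.single i 1)).det := by
      funext t; rw [Matrix.adjugate_apply]
    rw [hadj]
    refine diffAt_det _ fun a b => ?_
    rcases eq_or_ne a j with rfl | hja
    · simp only [Matrix.updateRow_self]
      exact differentiableAt_const _
    · simp only [Matrix.updateRow_ne hja]
      exact hdiffG a b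
  -- the derivative of the inverse entries
  set v : ι → ι → ℝ := fun i j => deriv (fun t => ginv t i j) 0 with hvdef
  have hv : ∀ i j : ι, HasDerivAt (fun t => ginv t i j) (v i j) 0 := fun i j =>
    (hdiffginv i j).hasDerivAt
  have hvsymm : ∀ i j : ι, v i j = v j i := by
    intro i j
    have h1 : (fun t => ginv t i j) = fun t => ginv t j i := funext fun t => hginvsymm t i j
    exact ((h1 ▸ hv i j : HasDerivAt (fun t => ginv t j i) (v i j) 0)).unique (hv j i)
  -- differentiating `ginv * G = 1`
  have hkey : ∀ i j : ι,
      ∑ k, (v i k * g 0 (w k) (w j) + ginv 0 i k * h (w k) (w j)) = 0 := by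
    intro i j
    have hfun : (fun t => ∑ k, ginv t i k * g t (w k) (w j))
        = fun _ => if i = j then (1 : ℝ) else 0 := funext fun t => hNGt t i j
    have hd1 : HasDerivAt (fun t => ∑ k, ginv t i k * g t (w k) (w j))
        (∑ k, (v i k * g 0 (w k) (w j) + ginv 0 i k * h (w k) (w j))) 0 :=
      HasDerivAt.fun_sum fun k _ => (hv i k).mul (hg' (w k) (w j))
    rw [hfun] at hd1
    exact hd1.unique (hasDerivAt_const _ _)
  have hkey' : ∀ i j : ι,
      ∑ k, v i k * g 0 (w k) (w j) = -∑ k, ginv 0 i k * h (w k) (w j) := by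
    intro i j
    have := hkey i j
    rw [Finset.sum_add_distrib] at this
    linarith
  -- explicit formula for v
  have hvformula : ∀ i m : ι,
      v i m = -∑ p, ∑ q, ginv 0 i p * h (w p) (w q) * ginv 0 q m := by
    intro i m
    have step1 : v i m = ∑ j, (∑ k, v i k * g 0 (w k) (w j)) * ginv 0 j m := by
      calc v i m = ∑ k, v i k * (if k = m then 1 else 0) := by simp
        _ = ∑ k, v i k * ∑ j, g 0 (w k) (w j) * ginv 0 j m := by
            refine Finset.sum_congr rfl fun k _ => ?_
            rw [hGN0 k m]
        _ = ∑ k, ∑ j, v i k * (g 0 (w k) (w j) * ginv 0 j m) := by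
            simp [Finset.mul_sum]
        _ = ∑ j, ∑ k, v i k * (g 0 (w k) (w j) * ginv 0 j m) := Finset.sum_comm
        _ = ∑ j, (∑ k, v i k * g 0 (w k) (w j)) * ginv 0 j m := by
            refine Finset.sum_congr rfl fun j _ => ?_
            rw [Finset.sum_mul]
            exact Finset.sum_congr rfl fun k _ => by ring
    rw [step1]
    have step2 : ∀ j, (∑ k, v i k * g 0 (w k) (w j)) * ginv 0 j m
        = -(∑ k, ginv 0 i k * h (w k) (w j)) * ginv 0 j m := by
      intro j; rw [hkey' i j]
    calc ∑ j, (∑ k, v i k * g 0 (w k) (w j)) * ginv 0 j m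
        = ∑ j, -∑ k, ginv 0 i k * h (w k) (w j) * ginv 0 j m := by
          refine Finset.sum_congr rfl fun j _ => ?_
          rw [step2 j, neg_mul, Finset.sum_mul]
      _ = -∑ j, ∑ k, ginv 0 i k * h (w k) (w j) * ginv 0 j m := by
          rw [Finset.sum_neg_distrib]
      _ = -∑ p, ∑ q, ginv 0 i p * h (w p) (w q) * ginv 0 q m := by
          rw [neg_inj]
          exact Finset.sum_comm
  -- pair-exchange symmetry of the curvature
  have hRsym : ∀ (t : ℝ) (a b : V), R t a x b y = R t x a y b := by
    intro t a b
    rw [hR1 t x a y b, hR2 t a x y b, neg_neg]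
  -- the same symmetry for the derivative R'
  have hR'sym : ∀ a b : ι, R' (w a) x (w b) y = R' x (w a) y (w b) := by
    intro a b
    have h1 : (fun t => R t x (w a) y (w b)) = fun t => R t (w a) x (w b) y :=
      funext fun t => (hRsym t (w a) (w b)).symm
    have h2 := hR' x (w a) y (w b)
    rw [h1] at h2
    exact (h2.unique (hR' (w a) x (w b) y)).symm
  -- formula for r' x y
  have hr'formula : r' x y = (∑ i, ∑ j, v i j * R 0 (w i) x (w j) y)
      + ∑ i, ∑ j, ginv 0 i j * R' (w i) x (w j) y := by
    have hfun : (fun t => rt t x y)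
        = fun t => ∑ i, ∑ j, ginv t i j * R t x (w i) y (w j) :=
      funext fun t => hrt t x y
    have hd : HasDerivAt (fun t => ∑ i, ∑ j, ginv t i j * R t x (w i) y (w j))
        (∑ i, ∑ j, (v i j * R 0 x (w i) y (w j) + ginv 0 i j * R' x (w i) y (w j))) 0 :=
      HasDerivAt.fun_sum fun i _ => HasDerivAt.fun_sum fun j _ => (hv i j).mul (hR' x (w i) y (w j))
    rw [← hfun] at hd
    have heq := (hr' x y).unique hd
    rw [heq]
    simp only [Finset.sum_add_distrib]
    congr 1
    · refine Finset.sum_congr rfl fun i _ => Finset.sum_congr rfl fun j _ => ?_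
      rw [hRsym 0 (w i) (w j)]
    · refine Finset.sum_congr rfl fun i _ => Finset.sum_congr rfl fun j _ => ?_
      rw [hR'sym i j]
  -- the main derivative
  have hmain : HasDerivAt (fun t => circRt t x y)
      (∑ i, ∑ j, ∑ p, ∑ q,
        (((v i p * ginv 0 j q + ginv 0 i p * v j q) * R 0 (w i) x (w j) y
            + ginv 0 i p * ginv 0 j q * R' (w i) x (w j) y) * rt 0 (w p) (w q)
          + ginv 0 i p * ginv 0 j q * R 0 (w i) x (w j) y * r' (w p) (w q))) 0 := by
    have hfun : (fun t => circRt t x y) = fun t => ∑ i, ∑ j, ∑ p, ∑ q,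
        ginv t i p * ginv t j q * R t (w i) x (w j) y * rt t (w p) (w q) :=
      funext fun t => hcircRt t x y
    rw [hfun]
    exact HasDerivAt.fun_sum fun i _ => HasDerivAt.fun_sum fun j _ => HasDerivAt.fun_sum fun p _ =>
      HasDerivAt.fun_sum fun q _ =>
        (((hv i p).mul (hv j q)).mul (hR' (w i) x (w j) y)).mul (hr' (w p) (w q))
  -- the four contracted sums
  have hS1 : ∑ i, ∑ j, ∑ p, ∑ q,
      v i p * ginv 0 j q * R 0 (w i) x (w j) y * (lam * g 0 (w p) (w q))
      = lam * ∑ i, ∑ j, v i j * R 0 (w i) x (w j) y := by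
    rw [Finset.mul_sum]
    refine Finset.sum_congr rfl fun i _ => ?_
    rw [Finset.mul_sum]
    refine Finset.sum_congr rfl fun j _ => ?_
    calc ∑ p, ∑ q, v i p * ginv 0 j q * R 0 (w i) x (w j) y * (lam * g 0 (w p) (w q))
        = ∑ p, (v i p * R 0 (w i) x (w j) y * lam)
            * ∑ q, ginv 0 j q * g 0 (w q) (w p) := by
          refine Finset.sum_congr rfl fun p _ => ?_
          rw [Finset.mul_sum]
          refine Finset.sum_congr rfl fun q _ => ?_
          rw [hgsymm 0 (w q) (w p)]
          ring
      _ = ∑ p, (v i p * R 0 (w i) x (w j) y * lam) * (if j = p then 1 else 0) := by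
          refine Finset.sum_congr rfl fun p _ => ?_
          rw [hNGt 0 j p]
      _ = v i j * R 0 (w i) x (w j) y * lam := by simp
      _ = lam * (v i j * R 0 (w i) x (w j) y) := by ring
  have hS2 : ∑ i, ∑ j, ∑ p, ∑ q,
      ginv 0 i p * v j q * R 0 (w i) x (w j) y * (lam * g 0 (w p) (w q))
      = lam * ∑ i, ∑ j, v i j * R 0 (w i) x (w j) y := by
    rw [Finset.mul_sum]
    refine Finset.sum_congr rfl fun i _ => ?_
    rw [Finset.mul_sum]
    refine Finset.sum_congr rfl fun j _ => ?_
    calc ∑ p, ∑ q, ginv 0 i p * v j q * R 0 (w i) x (w j) y * (lam * g 0 (w p) (w q))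
        = ∑ q, ∑ p, ginv 0 i p * v j q * R 0 (w i) x (w j) y * (lam * g 0 (w p) (w q)) :=
          Finset.sum_comm
      _ = ∑ q, (v j q * R 0 (w i) x (w j) y * lam)
            * ∑ p, ginv 0 i p * g 0 (w p) (w q) := by
          refine Finset.sum_congr rfl fun q _ => ?_
          rw [Finset.mul_sum]
          refine Finset.sum_congr rfl fun p _ => ?_
          ring
      _ = ∑ q, (v j q * R 0 (w i) x (w j) y * lam) * (if i = q then 1 else 0) := by
          refine Finset.sum_congr rfl fun q _ => ?_
          rw [hNGt 0 i q]
      _ = v j i * R 0 (w i) x (w j) y * lam := by simp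
      _ = lam * (v i j * R 0 (w i) x (w j) y) := by rw [hvsymm j i]; ring
  have hS3 : ∑ i, ∑ j, ∑ p, ∑ q,
      ginv 0 i p * ginv 0 j q * R' (w i) x (w j) y * (lam * g 0 (w p) (w q))
      = lam * ∑ i, ∑ j, ginv 0 i j * R' (w i) x (w j) y := by
    rw [Finset.mul_sum]
    refine Finset.sum_congr rfl fun i _ => ?_
    rw [Finset.mul_sum]
    refine Finset.sum_congr rfl fun j _ => ?_
    calc ∑ p, ∑ q, ginv 0 i p * ginv 0 j q * R' (w i) x (w j) y * (lam * g 0 (w p) (w q))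
        = ∑ p, (ginv 0 i p * R' (w i) x (w j) y * lam)
            * ∑ q, ginv 0 j q * g 0 (w q) (w p) := by
          refine Finset.sum_congr rfl fun p _ => ?_
          rw [Finset.mul_sum]
          refine Finset.sum_congr rfl fun q _ => ?_
          rw [hgsymm 0 (w q) (w p)]
          ring
      _ = ∑ p, (ginv 0 i p * R' (w i) x (w j) y * lam) * (if j = p then 1 else 0) := by
          refine Finset.sum_congr rfl fun p _ => ?_
          rw [hNGt 0 j p]
      _ = ginv 0 i j * R' (w i) x (w j) y * lam := by simp
      _ = lam * (ginv 0 i j * R' (w i) x (w j) y) := by ring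
  -- circR h in terms of v
  have hA : circR h x y = -∑ i, ∑ j, v i j * R 0 (w i) x (w j) y := by
    rw [hcircR]
    have hstep : ∀ i j : ι, ∑ p, ∑ q,
        ginv 0 i p * ginv 0 j q * R 0 (w i) x (w j) y * h (w p) (w q)
        = (∑ p, ∑ q, ginv 0 i p * h (w p) (w q) * ginv 0 q j) * R 0 (w i) x (w j) y := by
      intro i j
      rw [Finset.sum_mul]
      refine Finset.sum_congr rfl fun p _ => ?_
      rw [Finset.sum_mul]
      refine Finset.sum_congr rfl fun q _ => ?_
      rw [hginvsymm 0 q j]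
      ring
    calc ∑ i, ∑ j, ∑ p, ∑ q,
        ginv 0 i p * ginv 0 j q * R 0 (w i) x (w j) y * h (w p) (w q)
        = ∑ i, ∑ j, -v i j * R 0 (w i) x (w j) y := by
          refine Finset.sum_congr rfl fun i _ => Finset.sum_congr rfl fun j _ => ?_
          rw [hstep i j, hvformula i j, neg_neg]
      _ = -∑ i, ∑ j, v i j * R 0 (w i) x (w j) y := by
          simp [neg_mul, Finset.sum_neg_distrib]
  -- put everything together
  have hEq : (∑ i, ∑ j, ∑ p, ∑ q,
        (((v i p * ginv 0 j q + ginv 0 i p * v j q) * R 0 (w i) x (w j) y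
            + ginv 0 i p * ginv 0 j q * R' (w i) x (w j) y) * rt 0 (w p) (w q)
          + ginv 0 i p * ginv 0 j q * R 0 (w i) x (w j) y * r' (w p) (w q)))
      = -lam * circR h x y + circR r' x y + lam * r' x y := by
    have hsplit : (∑ i, ∑ j, ∑ p, ∑ q,
        (((v i p * ginv 0 j q + ginv 0 i p * v j q) * R 0 (w i) x (w j) y
            + ginv 0 i p * ginv 0 j q * R' (w i) x (w j) y) * rt 0 (w p) (w q)
          + ginv 0 i p * ginv 0 j q * R 0 (w i) x (w j) y * r' (w p) (w q)))
        = (∑ i, ∑ j, ∑ p, ∑ q,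
            v i p * ginv 0 j q * R 0 (w i) x (w j) y * (lam * g 0 (w p) (w q)))
          + (∑ i, ∑ j, ∑ p, ∑ q,
            ginv 0 i p * v j q * R 0 (w i) x (w j) y * (lam * g 0 (w p) (w q)))
          + (∑ i, ∑ j, ∑ p, ∑ q,
            ginv 0 i p * ginv 0 j q * R' (w i) x (w j) y * (lam * g 0 (w p) (w q)))
          + (∑ i, ∑ j, ∑ p, ∑ q,
            ginv 0 i p * ginv 0 j q * R 0 (w i) x (w j) y * r' (w p) (w q)) := by
      calc (∑ i, ∑ j, ∑ p, ∑ q,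
          (((v i p * ginv 0 j q + ginv 0 i p * v j q) * R 0 (w i) x (w j) y
              + ginv 0 i p * ginv 0 j q * R' (w i) x (w j) y) * rt 0 (w p) (w q)
            + ginv 0 i p * ginv 0 j q * R 0 (w i) x (w j) y * r' (w p) (w q)))
          = ∑ i, ∑ j, ∑ p, ∑ q,
            (v i p * ginv 0 j q * R 0 (w i) x (w j) y * (lam * g 0 (w p) (w q))
              + ginv 0 i p * v j q * R 0 (w i) x (w j) y * (lam * g 0 (w p) (w q))
              + ginv 0 i p * ginv 0 j q * R' (w i) x (w j) y * (lam * g 0 (w p) (w q))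
              + ginv 0 i p * ginv 0 j q * R 0 (w i) x (w j) y * r' (w p) (w q)) := by
            refine Finset.sum_congr rfl fun i _ => Finset.sum_congr rfl fun j _ =>
              Finset.sum_congr rfl fun p _ => Finset.sum_congr rfl fun q _ => ?_
            rw [hEinstein (w p) (w q)]
            ring
        _ = _ := by simp only [Finset.sum_add_distrib]
    rw [hsplit, hS1, hS2, hS3, ← hcircR r' x y, hA, hr'formula]
    ring
  exact hEq ▸ hmain
end

section
/- First variation of the tensor Ř (index form of Lemma 6): let Ř_t(x,y) := Σ g_t^{i₁i₂} g_t^{j₁j₂} g_t^{k₁k₂} R_t(x, w_{i₁}, w_{j₁}, w_{k₁}) R_t(y, w_{i₂}, w_{j₂}, w_{k₂}) (sum over all indices, {w_i} any fixed basis of V and (g_t^{ij}) the inverse of the matrix (g_t(w_i,w_j))). Then, for any g_0-orthonormal basis {v_1, …, v_n} of V and all x, y ∈ V: (d/dt)|_{t=0} Ř_t(x,y) = −Σ_{m,n} h(v_m, v_n)·[ Σ_{i,j} R(x, v_m, v_i, v_j) R(y, v_n, v_i, v_j) + 2 Σ_{i,j} R(x, v_i, v_m, v_j) R(y, v_i,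 v_n, v_j) ] + Σ_{i,j,k} [ R̄(x, v_i, v_j, v_k) R(y, v_i, v_j, v_k) + R(x, v_i, v_j, v_k) R̄(y, v_i, v_j, v_k) ], where R := R_0, R̄ := (d/dt)|_{t=0} R_t and h := (d/dt)|_{t=0} g_t. -/
open scoped BigOperators

open Matrix

section helpers
variable {ι : Type*} [Fintype ι] [DecidableEq ι]

private lemma det_diffAt {M : ℝ → Matrix ι ι ℝ}
    (hM : ∀ i j, DifferentiableAt ℝ (fun t => M t i j) 0) :
    DifferentiableAt ℝ (fun t => (M t).det) 0 := by
  simp only [Matrix.det_apply']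
  apply DifferentiableAt.fun_sum
  intro σ _
  exact ((HasDerivAt.fun_finsetProd (u := Finset.univ)
    (fun i _ => (hM (σ i) i).hasDerivAt)).differentiableAt).const_mul _

private lemma inv_entry_diffAt {M : ℝ → Matrix ι ι ℝ}
    (hM : ∀ i j, DifferentiableAt ℝ (fun t => M t i j) 0)
    (hdet : (M 0).det ≠ 0) (p q : ι) :
    DifferentiableAt ℝ (fun t => (M t)⁻¹ p q) 0 := by
  have hfun : (fun t => (M t)⁻¹ p q)
      = fun t => ((M t).det)⁻¹ * ((M t).adjugate p q) := by
    funext t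
    rw [Matrix.inv_def, Matrix.smul_apply, Ring.inverse_eq_inv, smul_eq_mul]
  rw [hfun]
  refine DifferentiableAt.mul ((det_diffAt hM).inv hdet) ?_
  have : ∀ t, (M t).adjugate p q = ((M t).updateRow q (Pi.single p 1)).det := by
    intro t; rw [Matrix.adjugate_apply]
  simp only [this]
  apply det_diffAt
  intro i j
  by_cases hiq : i = q
  · subst hiq
    simp only [Matrix.updateRow_self]
    exact differentiableAt_const _
  · simp only [Matrix.updateRow_ne hiq]
    exact hM i j

end helpers

set_option maxHeartbeats 4000000 in
private lemma key6 {ι : Type*} [Fintype ι] (c M : ι → ι → ℝ) (F G : ι → ι → ι → ℝ) :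
    (∑ i₁, ∑ i₂, ∑ j₁, ∑ j₂, ∑ k₁, ∑ k₂,
       (∑ a, ∑ b, c a i₁ * M a b * c b i₂) * (∑ a, ∑ b, c a j₁ * M a b * c b j₂) *
       (∑ a, ∑ b, c a k₁ * M a b * c b k₂) * F i₁ j₁ k₁ * G i₂ j₂ k₂)
    = ∑ p₁, ∑ p₂, ∑ q₁, ∑ q₂, ∑ r₁, ∑ r₂,
        M p₁ p₂ * M q₁ q₂ * M r₁ r₂ *
        (∑ i, ∑ j, ∑ k, c p₁ i * c q₁ j * c r₁ k * F i j k) *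
        (∑ i, ∑ j, ∑ k, c p₂ i * c q₂ j * c r₂ k * G i j k) := by
  simp (config := { maxSteps := 10000000 }) only [Finset.sum_mul, Finset.mul_sum]
  simp only [← Fintype.sum_prod_type']
  exact Fintype.sum_equiv ⟨fun p => (p.2.2.2.2.2.2.2.2.2.2.1, p.2.2.2.2.2.2.2.2.2.2.2, p.2.2.2.2.2.2.2.2.1, p.2.2.2.2.2.2.2.2.2.1, p.2.2.2.2.2.2.1, p.2.2.2.2.2.2.2.1, p.2.1, p.2.2.2.1, p.2.2.2.2.2.1, p.1, p.2.2.1, p.2.2.2.2.1), fun p => (p.2.2.2.2.2.2.2.2.2.1, p.2.2.2.2.2.2.1, p.2.2.2.2.2.2.2.2.2.2.1, p.2.2.2.2.2.2.2.1, p.2.2.2.2.2.2.2.2.2.2.2, p.2.2.2.2.2.2.2.2.1, p.2.2.2.2.1, p.2.2.2.2.2.1, p.2.2.1, p.2.2.2.1, p.1, p.2.1),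
    fun p => rfl, fun p => rfl⟩ _ _ (fun p => by dsimp; ring)


set_option maxHeartbeats 4000000 in
/-- index form of Lemma 6: first variation of the tensor `Ř`. -/
theorem stmt_6
    {V : Type*} [AddCommGroup V] [Module ℝ V] [FiniteDimensional ℝ V]
    {ι : Type*} [Fintype ι] [DecidableEq ι]
    (w : Module.Basis ι ℝ V)
    (g : ℝ → V →ₗ[ℝ] V →ₗ[ℝ] ℝ)
    (hgsymm : ∀ (t : ℝ) (x y : V), g t x y = g t y x)
    (hgpos : ∀ (t : ℝ) (x : V), x ≠ 0 → 0 < g t x x)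
    (R : ℝ → V →ₗ[ℝ] V →ₗ[ℝ] V →ₗ[ℝ] V →ₗ[ℝ] ℝ)
    (hR1 : ∀ (t : ℝ) (x y z u : V), R t x y z u = -R t y x z u)
    (hR2 : ∀ (t : ℝ) (x y z u : V), R t x y z u = -R t x y u z)
    (hR3 : ∀ (t : ℝ) (x y z u : V), R t x y z u = R t z u x y)
    (hBianchi : ∀ (t : ℝ) (x y z u : V),
      R t x y z u + R t y z x u + R t z x y u = 0)
    (h : V → V → ℝ) (R' : V → V → V → V → ℝ)
    (hg' : ∀ x y : V, HasDerivAt (fun t => g t x y) (h x y) 0)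
    (hR' : ∀ x y z u : V, HasDerivAt (fun t => R t x y z u) (R' x y z u) 0)
    -- the inverse of the Gram matrix of `g_t` in the fixed basis `w`
    (ginv : ℝ → ι → ι → ℝ)
    (hginv : ∀ t : ℝ, ginv t = fun i j => (Matrix.of fun i j => g t (w i) (w j))⁻¹ i j)
    -- the tensor `Ř_t`
    (Rcheck : ℝ → V → V → ℝ)
    (hRcheck : ∀ (t : ℝ) (x y : V), Rcheck t x y =
      ∑ i₁, ∑ i₂, ∑ j₁, ∑ j₂, ∑ k₁, ∑ k₂,
        ginv t i₁ i₂ * ginv t j₁ j₂ * ginv t k₁ k₂ *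
          R t x (w i₁) (w j₁) (w k₁) * R t y (w i₂) (w j₂) (w k₂))
    -- an arbitrary `g_0`-orthonormal basis `v`
    {ι' : Type*} [Fintype ι'] [DecidableEq ι']
    (v : Module.Basis ι' ℝ V)
    (hvON : ∀ i j : ι', g 0 (v i) (v j) = if i = j then 1 else 0)
    (x y : V) :
    HasDerivAt (fun t => Rcheck t x y)
      (-(∑ p, ∑ q, h (v p) (v q) *
          ((∑ i, ∑ j, R 0 x (v p) (v i) (v j) * R 0 y (v q) (v i) (v j))
            + 2 * ∑ i, ∑ j, R 0 x (v i) (v p) (v j) * R 0 y (v i) (v q) (v j)))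
        + ∑ i, ∑ j, ∑ k,
          (R' x (v i) (v j) (v k) * R 0 y (v i) (v j) (v k)
            + R 0 x (v i) (v j) (v k) * R' y (v i) (v j) (v k))) 0 := by
  classical
  have hcard : Fintype.card ι' = Fintype.card ι := by
    rw [← Module.finrank_eq_card_basis v, ← Module.finrank_eq_card_basis w]
  let e : ι' ≃ ι := Fintype.equivOfCardEq hcard
  let u : Module.Basis ι ℝ V := v.reindex e
  have hu : ∀ i, u i = v (e.symm i) := fun i => v.reindex_apply e i
  have huON : ∀ i j, g 0 (u i) (u j) = if i = j then 1 else 0 := by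
    intro i j
    rw [hu, hu, hvON]
    simp [e.symm.injective.eq_iff]
  set C : Matrix ι ι ℝ := Matrix.of fun p i => w.repr (u p) i with hCdef
  have hC : ∀ p, u p = ∑ i, C p i • w i := fun p => (w.sum_repr (u p)).symm
  have hCT : Cᵀ = w.toMatrix u := by
    ext i j; simp [hCdef, Matrix.transpose_apply, Module.Basis.toMatrix_apply]
  have hdetC : IsUnit C.det := by
    have : Invertible (w.toMatrix u) := w.invertibleToMatrix u
    have h1 : IsUnit (w.toMatrix u).det :=
      (Matrix.isUnit_iff_isUnit_det _).mp (isUnit_of_invertible _)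
    rw [← Matrix.det_transpose C, hCT]; exact h1
  -- Gram matrices
  set Gw : ℝ → Matrix ι ι ℝ := fun t => Matrix.of fun i j => g t (w i) (w j) with hGwdef
  set Gu : ℝ → Matrix ι ι ℝ := fun t => Matrix.of fun i j => g t (u i) (u j) with hGudef
  have hGu0 : Gu 0 = 1 := by
    ext i j; simp [hGudef, huON, Matrix.one_apply]
  have hgexp : ∀ (t : ℝ) (p q : ι), g t (u p) (u q) =
      ∑ i, ∑ j, C p i * (g t (w i) (w j) * C q j) := by
    intro t p q
    rw [hC p, hC q]
    simp only [map_sum, LinearMap.coe_sum, Finset.sum_apply, _root_.map_smul,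
      LinearMap.smul_apply, smul_eq_mul, Finset.mul_sum]
    rw [Finset.sum_comm]
    refine Finset.sum_congr rfl fun i _ => ?_
    refine Finset.sum_congr rfl fun j _ => ?_
    ring
  have hcongr : ∀ t, Gu t = C * Gw t * Cᵀ := by
    intro t
    ext p q
    rw [Matrix.mul_apply]
    simp only [Matrix.mul_apply, Matrix.transpose_apply, Finset.sum_mul]
    rw [show (Gu t) p q = g t (u p) (u q) from rfl, hgexp t p q, Finset.sum_comm]
    refine Finset.sum_congr rfl fun j _ => ?_
    refine Finset.sum_congr rfl fun i _ => ?_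
    rw [← mul_assoc]; rfl
  have hinv_rel : ∀ t, (Gw t)⁻¹ = Cᵀ * (Gu t)⁻¹ * C := by
    intro t
    rw [hcongr t, Matrix.mul_inv_rev, Matrix.mul_inv_rev]
    have hCTdet : IsUnit (Cᵀ).det := by rwa [Matrix.det_transpose]
    rw [← Matrix.mul_assoc, ← Matrix.mul_assoc, Matrix.mul_nonsing_inv _ hCTdet,
      Matrix.one_mul, Matrix.mul_assoc, Matrix.nonsing_inv_mul _ hdetC, Matrix.mul_one]
  -- expansion of curvature slots
  have hRexp : ∀ (t : ℝ) (z : V) (p q r : ι), R t z (u p) (u q) (u r) =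
      ∑ i, ∑ j, ∑ k, C p i * C q j * C r k * R t z (w i) (w j) (w k) := by
    intro t z p q r
    rw [hC p, hC q, hC r]
    simp only [map_sum, LinearMap.coe_sum, Finset.sum_apply, _root_.map_smul,
      LinearMap.smul_apply, smul_eq_mul, Finset.mul_sum]
    simp only [← Fintype.sum_prod_type']
    refine Fintype.sum_equiv ⟨fun p => (p.2.2, p.2.1, p.1), fun p => (p.2.2, p.2.1, p.1),
      fun p => rfl, fun p => rfl⟩ _ _ (fun p => by dsimp; ring)
  -- entries of congruent inverse
  have hMexp : ∀ (M : Matrix ι ι ℝ) (i j : ι), (Cᵀ * M * C) i j =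
      ∑ a, ∑ b, C a i * M a b * C b j := by
    intro M i j
    simp only [Matrix.mul_apply, Matrix.transpose_apply, Finset.sum_mul]
    rw [Finset.sum_comm]
  -- basis invariance of the `Ř` tensor
  have hPhi : ∀ t, Rcheck t x y =
      ∑ p₁, ∑ p₂, ∑ q₁, ∑ q₂, ∑ r₁, ∑ r₂,
        (Gu t)⁻¹ p₁ p₂ * (Gu t)⁻¹ q₁ q₂ * (Gu t)⁻¹ r₁ r₂ *
          R t x (u p₁) (u q₁) (u r₁) * R t y (u p₂) (u q₂) (u r₂) := by
    intro t
    rw [hRcheck]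
    have hg1 : ∀ i j : ι, ginv t i j = (Cᵀ * (Gu t)⁻¹ * C) i j := by
      intro i j
      rw [hginv t]
      show (Gw t)⁻¹ i j = _
      rw [hinv_rel t]
    simp only [hg1, hMexp, hRexp]
    exact key6 (fun a i => C a i) (fun a b => (Gu t)⁻¹ a b)
      (fun i j k => R t x (w i) (w j) (w k)) (fun i j k => R t y (w i) (w j) (w k))
  -- derivative of the entries of `(Gu t)⁻¹`
  have hGuD : ∀ p q, HasDerivAt (fun t => Gu t p q) (h (u p) (u q)) 0 :=
    fun p q => hg' (u p) (u q)
  have hdet0 : (Gu 0).det ≠ 0 := by rw [hGu0]; simp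
  have hdiff : ∀ p q, DifferentiableAt ℝ (fun t => (Gu t)⁻¹ p q) 0 :=
    inv_entry_diffAt (fun i j => (hGuD i j).differentiableAt) hdet0
  set D : ι → ι → ℝ := fun p q => deriv (fun t => (Gu t)⁻¹ p q) 0 with hDdef
  have hD : ∀ p q, HasDerivAt (fun t => (Gu t)⁻¹ p q) (D p q) 0 :=
    fun p q => (hdiff p q).hasDerivAt
  have hA : ∀ p q, (Gu 0)⁻¹ p q = if p = q then (1:ℝ) else 0 := by
    rw [hGu0, inv_one]; exact fun p q => Matrix.one_apply
  have hDval : ∀ p q, D p q = -(h (u p) (u q)) := by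
    intro p q
    have h1 : (fun _ : ℝ => (1 : Matrix ι ι ℝ) p q) =ᶠ[nhds (0:ℝ)]
        (fun t => ∑ j, (Gu t)⁻¹ p j * Gu t j q) := by
      have hev : ∀ᶠ t in nhds (0:ℝ), (Gu t).det ≠ 0 :=
        ((det_diffAt (fun i j => (hGuD i j).differentiableAt)).continuousAt).eventually_ne hdet0
      filter_upwards [hev] with t ht
      rw [← Matrix.mul_apply, Matrix.nonsing_inv_mul _ (isUnit_iff_ne_zero.mpr ht)]
    have h2 : HasDerivAt (fun t => ∑ j, (Gu t)⁻¹ p j * Gu t j q)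
        (∑ j, (D p j * Gu 0 j q + (Gu 0)⁻¹ p j * h (u j) (u q))) 0 :=
      HasDerivAt.fun_sum (fun j _ => (hD p j).mul (hGuD j q))
    have h3 := h2.congr_of_eventuallyEq h1
    have h4 := h3.unique (hasDerivAt_const 0 _)
    have h5 : ∑ j, (D p j * Gu 0 j q + (Gu 0)⁻¹ p j * h (u j) (u q))
        = D p q + h (u p) (u q) := by
      rw [Finset.sum_add_distrib]
      congr 1
      · rw [hGu0]
        simp [Matrix.one_apply]
      · simp [hA]
    rw [h5] at h4
    linarith
  -- the derivative of the `u`-basis expression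
  have main : HasDerivAt (fun t =>
      ∑ p₁, ∑ p₂, ∑ q₁, ∑ q₂, ∑ r₁, ∑ r₂,
        (Gu t)⁻¹ p₁ p₂ * (Gu t)⁻¹ q₁ q₂ * (Gu t)⁻¹ r₁ r₂ *
          R t x (u p₁) (u q₁) (u r₁) * R t y (u p₂) (u q₂) (u r₂))
      (∑ p₁, ∑ p₂, ∑ q₁, ∑ q₂, ∑ r₁, ∑ r₂,
        ((((D p₁ p₂ * (Gu 0)⁻¹ q₁ q₂ + (Gu 0)⁻¹ p₁ p₂ * D q₁ q₂) * (Gu 0)⁻¹ r₁ r₂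
            + (Gu 0)⁻¹ p₁ p₂ * (Gu 0)⁻¹ q₁ q₂ * D r₁ r₂) * R 0 x (u p₁) (u q₁) (u r₁)
          + (Gu 0)⁻¹ p₁ p₂ * (Gu 0)⁻¹ q₁ q₂ * (Gu 0)⁻¹ r₁ r₂ * R' x (u p₁) (u q₁) (u r₁))
            * R 0 y (u p₂) (u q₂) (u r₂)
        + (Gu 0)⁻¹ p₁ p₂ * (Gu 0)⁻¹ q₁ q₂ * (Gu 0)⁻¹ r₁ r₂ * R 0 x (u p₁) (u q₁) (u r₁)
            * R' y (u p₂) (u q₂) (u r₂))) 0 := by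
    apply HasDerivAt.fun_sum; intro p₁ _
    apply HasDerivAt.fun_sum; intro p₂ _
    apply HasDerivAt.fun_sum; intro q₁ _
    apply HasDerivAt.fun_sum; intro q₂ _
    apply HasDerivAt.fun_sum; intro r₁ _
    apply HasDerivAt.fun_sum; intro r₂ _
    exact ((((hD p₁ p₂).mul (hD q₁ q₂)).mul (hD r₁ r₂)).mul
      (hR' x (u p₁) (u q₁) (u r₁))).mul (hR' y (u p₂) (u q₂) (u r₂))
  have hval_eq : (∑ p₁, ∑ p₂, ∑ q₁, ∑ q₂, ∑ r₁, ∑ r₂,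
        ((((D p₁ p₂ * (Gu 0)⁻¹ q₁ q₂ + (Gu 0)⁻¹ p₁ p₂ * D q₁ q₂) * (Gu 0)⁻¹ r₁ r₂
            + (Gu 0)⁻¹ p₁ p₂ * (Gu 0)⁻¹ q₁ q₂ * D r₁ r₂) * R 0 x (u p₁) (u q₁) (u r₁)
          + (Gu 0)⁻¹ p₁ p₂ * (Gu 0)⁻¹ q₁ q₂ * (Gu 0)⁻¹ r₁ r₂ * R' x (u p₁) (u q₁) (u r₁))
            * R 0 y (u p₂) (u q₂) (u r₂)
        + (Gu 0)⁻¹ p₁ p₂ * (Gu 0)⁻¹ q₁ q₂ * (Gu 0)⁻¹ r₁ r₂ * R 0 x (u p₁) (u q₁) (u r₁)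
            * R' y (u p₂) (u q₂) (u r₂))) = (-(∑ p : ι, ∑ q : ι, h (u p) (u q) *
          ((∑ i : ι, ∑ j : ι, R 0 x (u p) (u i) (u j) * R 0 y (u q) (u i) (u j))
            + 2 * ∑ i : ι, ∑ j : ι, R 0 x (u i) (u p) (u j) * R 0 y (u i) (u q) (u j)))
        + ∑ i : ι, ∑ j : ι, ∑ k : ι,
          (R' x (u i) (u j) (u k) * R 0 y (u i) (u j) (u k)
            + R 0 x (u i) (u j) (u k) * R' y (u i) (u j) (u k))) := by
    simp only [hDval, hA]
    simp [mul_ite, ite_mul, mul_zero, zero_mul, mul_one, one_mul, neg_mul, mul_neg,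
      add_mul, mul_add, Finset.sum_add_distrib, Finset.sum_ite_eq, Finset.sum_ite_eq',
      Finset.sum_neg_distrib, Finset.sum_sub_distrib, Finset.mem_univ, if_true, sub_eq_add_neg]
    have e1 : (∑ a : ι, ∑ b : ι, ∑ c : ι, ∑ d : ι,
          h (u a) (u b) * R 0 x (u a) (u c) (u d) * R 0 y (u b) (u c) (u d))
        = ∑ a : ι, ∑ b : ι, h (u a) (u b) *
            ∑ i : ι, ∑ j : ι, R 0 x (u a) (u i) (u j) * R 0 y (u b) (u i) (u j) := by
      simp only [Finset.mul_sum]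
      refine Finset.sum_congr rfl fun a _ => ?_
      refine Finset.sum_congr rfl fun b _ => ?_
      refine Finset.sum_congr rfl fun c _ => ?_
      refine Finset.sum_congr rfl fun d _ => ?_
      ring
    have e2 : (∑ a : ι, ∑ b : ι, ∑ c : ι, ∑ d : ι,
          h (u b) (u c) * R 0 x (u a) (u b) (u d) * R 0 y (u a) (u c) (u d))
        = ∑ a : ι, ∑ b : ι, h (u a) (u b) *
            ∑ i : ι, ∑ j : ι, R 0 x (u i) (u a) (u j) * R 0 y (u i) (u b) (u j) := by
      simp only [Finset.mul_sum]
      simp only [← Fintype.sum_prod_type']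
      exact Fintype.sum_equiv ⟨fun p => (p.2.1, p.2.2.1, p.1, p.2.2.2),
        fun p => (p.2.2.1, p.1, p.2.1, p.2.2.2), fun p => rfl, fun p => rfl⟩ _ _
        (fun p => by dsimp; ring)
    have e3 : (∑ a : ι, ∑ b : ι, ∑ c : ι, ∑ d : ι,
          h (u c) (u d) * R 0 x (u a) (u b) (u c) * R 0 y (u a) (u b) (u d))
        = ∑ a : ι, ∑ b : ι, h (u a) (u b) *
            ∑ i : ι, ∑ j : ι, R 0 x (u i) (u a) (u j) * R 0 y (u i) (u b) (u j) := by
      have swap : ∀ a b c d : ι,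
          h (u c) (u d) * R 0 x (u a) (u b) (u c) * R 0 y (u a) (u b) (u d)
            = h (u c) (u d) * R 0 x (u a) (u c) (u b) * R 0 y (u a) (u d) (u b) := by
        intro a b c d
        rw [hR2 0 x (u a) (u b) (u c), hR2 0 y (u a) (u b) (u d)]
        ring
      calc (∑ a : ι, ∑ b : ι, ∑ c : ι, ∑ d : ι,
            h (u c) (u d) * R 0 x (u a) (u b) (u c) * R 0 y (u a) (u b) (u d))
          = ∑ a : ι, ∑ b : ι, ∑ c : ι, ∑ d : ι,
            h (u c) (u d) * R 0 x (u a) (u c) (u b) * R 0 y (u a) (u d) (u b) := by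
            refine Finset.sum_congr rfl fun a _ => ?_
            refine Finset.sum_congr rfl fun b _ => ?_
            refine Finset.sum_congr rfl fun c _ => ?_
            refine Finset.sum_congr rfl fun d _ => ?_
            exact swap a b c d
        _ = ∑ a : ι, ∑ b : ι, h (u a) (u b) *
              ∑ i : ι, ∑ j : ι, R 0 x (u i) (u a) (u j) * R 0 y (u i) (u b) (u j) := by
            simp only [Finset.mul_sum]
            simp only [← Fintype.sum_prod_type']
            exact Fintype.sum_equiv ⟨fun p => (p.2.2.1, p.2.2.2, p.1, p.2.1),
              fun p => (p.2.2.1, p.2.2.2, p.1, p.2.1), fun p => rfl, fun p => rfl⟩ _ _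
              (fun p => by dsimp; ring)
    have eB : (∑ a : ι, ∑ b : ι, h (u a) (u b) *
          (2 * ∑ i : ι, ∑ j : ι, R 0 x (u i) (u a) (u j) * R 0 y (u i) (u b) (u j)))
        = (∑ a : ι, ∑ b : ι, h (u a) (u b) *
            ∑ i : ι, ∑ j : ι, R 0 x (u i) (u a) (u j) * R 0 y (u i) (u b) (u j))
          + (∑ a : ι, ∑ b : ι, h (u a) (u b) *
            ∑ i : ι, ∑ j : ι, R 0 x (u i) (u a) (u j) * R 0 y (u i) (u b) (u j)) := by
      rw [← Finset.sum_add_distrib]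
      refine Finset.sum_congr rfl fun a _ => ?_
      rw [← Finset.sum_add_distrib]
      refine Finset.sum_congr rfl fun b _ => ?_
      ring
    rw [e1, e2, e3, eB]
    ring
  have hsum1 : ∀ f : V → ℝ, (∑ i : ι, f (u i)) = ∑ p : ι', f (v p) := by
    intro f
    simp only [hu]
    exact Fintype.sum_equiv e.symm _ _ fun i => rfl
  have hsum2 : ∀ f : V → V → ℝ,
      (∑ i : ι, ∑ j : ι, f (u i) (u j)) = ∑ p : ι', ∑ q : ι', f (v p) (v q) := by
    intro f
    exact (hsum1 (fun z => ∑ j : ι, f z (u j))).trans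
      (Finset.sum_congr rfl fun p _ => hsum1 (fun z => f (v p) z))
  have hsum3 : ∀ f : V → V → V → ℝ,
      (∑ i : ι, ∑ j : ι, ∑ k : ι, f (u i) (u j) (u k))
        = ∑ i : ι', ∑ j : ι', ∑ k : ι', f (v i) (v j) (v k) := by
    intro f
    exact (hsum1 (fun z => ∑ j : ι, ∑ k : ι, f z (u j) (u k))).trans
      (Finset.sum_congr rfl fun p _ => hsum2 (fun z z' => f (v p) z z'))
  have hUT : (-(∑ p : ι, ∑ q : ι, h (u p) (u q) *
          ((∑ i : ι, ∑ j : ι, R 0 x (u p) (u i) (u j) * R 0 y (u q) (u i) (u j))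
            + 2 * ∑ i : ι, ∑ j : ι, R 0 x (u i) (u p) (u j) * R 0 y (u i) (u q) (u j)))
        + ∑ i : ι, ∑ j : ι, ∑ k : ι,
          (R' x (u i) (u j) (u k) * R 0 y (u i) (u j) (u k)
            + R 0 x (u i) (u j) (u k) * R' y (u i) (u j) (u k)))
      = (-(∑ p, ∑ q, h (v p) (v q) *
          ((∑ i, ∑ j, R 0 x (v p) (v i) (v j) * R 0 y (v q) (v i) (v j))
            + 2 * ∑ i, ∑ j, R 0 x (v i) (v p) (v j) * R 0 y (v i) (v q) (v j)))
        + ∑ i, ∑ j, ∑ k,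
          (R' x (v i) (v j) (v k) * R 0 y (v i) (v j) (v k)
            + R 0 x (v i) (v j) (v k) * R' y (v i) (v j) (v k))) := by
    congr 1
    · congr 1
      calc (∑ p : ι, ∑ q : ι, h (u p) (u q) *
              ((∑ i : ι, ∑ j : ι, R 0 x (u p) (u i) (u j) * R 0 y (u q) (u i) (u j))
                + 2 * ∑ i : ι, ∑ j : ι, R 0 x (u i) (u p) (u j) * R 0 y (u i) (u q) (u j)))
          = ∑ p : ι, ∑ q : ι, h (u p) (u q) *
              ((∑ i : ι', ∑ j : ι', R 0 x (u p) (v i) (v j) * R 0 y (u q) (v i) (v j))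
                + 2 * ∑ i : ι', ∑ j : ι', R 0 x (v i) (u p) (v j) * R 0 y (v i) (u q) (v j)) := by
            refine Finset.sum_congr rfl fun p _ => ?_
            refine Finset.sum_congr rfl fun q _ => ?_
            refine congrArg₂ (· * ·) rfl ?_
            refine congrArg₂ (· + ·) ?_ ?_
            · exact hsum2 (fun z z' => R 0 x (u p) z z' * R 0 y (u q) z z')
            · refine congrArg₂ (· * ·) rfl ?_
              exact hsum2 (fun z z' => R 0 x z (u p) z' * R 0 y z (u q) z')
        _ = ∑ p : ι', ∑ q : ι', h (v p) (v q) *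
              ((∑ i : ι', ∑ j : ι', R 0 x (v p) (v i) (v j) * R 0 y (v q) (v i) (v j))
                + 2 * ∑ i : ι', ∑ j : ι', R 0 x (v i) (v p) (v j) * R 0 y (v i) (v q) (v j)) :=
            hsum2 (fun a b => h a b *
              ((∑ i : ι', ∑ j : ι', R 0 x a (v i) (v j) * R 0 y b (v i) (v j))
                + 2 * ∑ i : ι', ∑ j : ι', R 0 x (v i) a (v j) * R 0 y (v i) b (v j)))
    · exact hsum3 (fun z z' z'' => R' x z z' z'' * R 0 y z z' z''
        + R 0 x z z' z'' * R' y z z' z'')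
  rw [funext hPhi]
  convert main using 1
  exact (hval_eq.trans hUT).symm
end
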